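/- Let x, y, a, b be complex numbers, let p > 1 and q be real numbers with 1/p + 1/q = 1, and let μ, ν, λ be positive real numbers. If λ^{1/(p-1)} ≥ μ^{1/(p-1)}·|a|^q + ν^{1/(p-1)}·|b|^q, then |x|^p/μ + |y|^p/ν ≥ |a·x + b·y|^p/λ. -/

import Mathlib

open Real

/-- Two-term Hölder inequality. -/
lemma holder_two {p q : ℝ} (hpq : Real.HolderConjugate p q) {u1 u2 v1 v2 : ℝ}
    (h1 : 0 ≤ u1) (h2 : 0 ≤ u2) (h3 : 0 ≤ v1) (h4 : 0 ≤ v2) :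
    u1 * v1 + u2 * v2 ≤ (u1 ^ q + u2 ^ q) ^ (1 / q) * (v1 ^ p + v2 ^ p) ^ (1 / p) := by
  have := Real.inner_le_Lp_mul_Lq_of_nonneg (Finset.univ : Finset (Fin 2))
    (f := ![u1, u2]) (g := ![v1, v2]) hpq.symm
    (by intro i _; fin_cases i <;> simpa) (by intro i _; fin_cases i <;> simpa)
  simpa [Fin.sum_univ_two, mul_comm] using this

/-- Theorem 1 (i): Euler–Lagrange / Bohr type inequality for complex numbers,
case μ, ν, λ > 0. -/
theorem bohr_type_complex_case_i (x y a b : ℂ) (p q : ℝ) (hp : 1 < p)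
    (hpq : 1 / p + 1 / q = 1) (μ ν lam : ℝ) (hμ : 0 < μ) (hν : 0 < ν) (hlam : 0 < lam)
    (h : μ ^ (1 / (p - 1)) * ‖a‖ ^ q + ν ^ (1 / (p - 1)) * ‖b‖ ^ q
      ≤ lam ^ (1 / (p - 1))) :
    ‖x‖ ^ p / μ + ‖y‖ ^ p / ν ≥ ‖a * x + b * y‖ ^ p / lam := by
  have hp0 : 0 < p := lt_trans one_pos hp
  have hcj : Real.HolderConjugate p q := Real.holderConjugate_iff.mpr ⟨hp, by rw [← one_div, ← one_div]; exact hpq⟩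
  have hq0 : 0 < q := hcj.symm.pos
  have hqp : q / p = 1 / (p - 1) := by
    rw [hcj.conjugate_eq, div_div, mul_comm, ← div_div, div_self hp0.ne']
  set S : ℝ := ‖x‖ ^ p / μ + ‖y‖ ^ p / ν with hS
  have hS0 : 0 ≤ S := by positivity
  -- key Hölder application
  have key : ‖a * x + b * y‖ ≤ lam ^ (1 / p) * S ^ (1 / p) := by
    have h1 : ‖a * x + b * y‖ ≤
        (μ ^ (1 / p) * ‖a‖) * (‖x‖ / μ ^ (1 / p)) +
        (ν ^ (1 / p) * ‖b‖) * (‖y‖ / ν ^ (1 / p)) := by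
      have hμp : (0:ℝ) < μ ^ (1 / p) := Real.rpow_pos_of_pos hμ _
      have hνp : (0:ℝ) < ν ^ (1 / p) := Real.rpow_pos_of_pos hν _
      calc ‖a * x + b * y‖ ≤ ‖a * x‖ + ‖b * y‖ :=
            norm_add_le _ _
        _ = ‖a‖ * ‖x‖ + ‖b‖ * ‖y‖ := by
            rw [norm_mul, norm_mul]
        _ = _ := by field_simp
    have h2 := holder_two hcj (u1 := μ ^ (1 / p) * ‖a‖)
      (u2 := ν ^ (1 / p) * ‖b‖) (v1 := ‖x‖ / μ ^ (1 / p))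
      (v2 := ‖y‖ / ν ^ (1 / p))
      (by positivity) (by positivity) (by positivity) (by positivity)
    have e1 : (μ ^ (1 / p) * ‖a‖) ^ q = μ ^ (1 / (p - 1)) * ‖a‖ ^ q := by
      rw [Real.mul_rpow (by positivity) (by positivity), ← Real.rpow_mul hμ.le]
      rw [show 1 / p * q = 1 / (p - 1) by rw [← hqp]; ring]
    have e2 : (ν ^ (1 / p) * ‖b‖) ^ q = ν ^ (1 / (p - 1)) * ‖b‖ ^ q := by
      rw [Real.mul_rpow (by positivity) (by positivity), ← Real.rpow_mul hν.le]
      rw [show 1 / p * q = 1 / (p - 1) by rw [← hqp]; ring]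
    have e3 : (‖x‖ / μ ^ (1 / p)) ^ p = ‖x‖ ^ p / μ := by
      rw [Real.div_rpow (by positivity) (by positivity), ← Real.rpow_mul hμ.le,
        one_div_mul_cancel hp0.ne', Real.rpow_one]
    have e4 : (‖y‖ / ν ^ (1 / p)) ^ p = ‖y‖ ^ p / ν := by
      rw [Real.div_rpow (by positivity) (by positivity), ← Real.rpow_mul hν.le,
        one_div_mul_cancel hp0.ne', Real.rpow_one]
    rw [e1, e2, e3, e4] at h2
    have h3 : (μ ^ (1 / (p - 1)) * ‖a‖ ^ q + ν ^ (1 / (p - 1)) * ‖b‖ ^ q)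
        ^ (1 / q) ≤ (lam ^ (1 / (p - 1))) ^ (1 / q) := by
      apply Real.rpow_le_rpow (by positivity) h (by positivity)
    have e5 : (lam ^ (1 / (p - 1))) ^ (1 / q) = lam ^ (1 / p) := by
      rw [← Real.rpow_mul hlam.le, ← hqp]
      congr 1
      field_simp
    calc ‖a * x + b * y‖ ≤ _ := le_trans h1 h2
      _ ≤ (lam ^ (1 / (p - 1))) ^ (1 / q) * S ^ (1 / p) := by
          apply mul_le_mul_of_nonneg_right h3 (by positivity)
      _ = lam ^ (1 / p) * S ^ (1 / p) := by rw [e5]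
  -- raise to power p
  have key2 : ‖a * x + b * y‖ ^ p ≤ lam * S := by
    calc ‖a * x + b * y‖ ^ p ≤ (lam ^ (1 / p) * S ^ (1 / p)) ^ p :=
          Real.rpow_le_rpow (by positivity) key hp0.le
      _ = lam * S := by
          rw [Real.mul_rpow (by positivity) (by positivity), ← Real.rpow_mul hlam.le,
            ← Real.rpow_mul hS0, one_div_mul_cancel hp0.ne', Real.rpow_one, Real.rpow_one]
  rw [ge_iff_le, div_le_iff₀ hlam]
  exact key2.trans_eq (mul_comm _ _)
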